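/- For all nonnegative integers a, b, n, the number of partitions of n into distinct parts, with largest part at most b, whose 2-core is the staircase Δ_a = (a, a−1, …, 2, 1), equals the coefficient of q^{n − a(a+1)/2} in the Gaussian binomial coefficient [b choose ⌊(b−a)/2⌋]_{q²} (interpreted as 0 when b < a, and where a coefficient of a negative power of q is 0). -/

import Mathlib

open Polynomial

/-- A partition: a weakly decreasing, finitely supported sequence of naturals;
`parts i` is the `(i+1)`-st part `λ_{i+1}`. -/
structure Partition' where
  parts : ℕ → ℕ
  antitone : ∀ ⦃i j : ℕ⦄, i ≤ j → parts j ≤ parts i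
  finite_support : (Function.support parts).Finite

namespace Partition'

/-- Cells, 0-indexed: `(i, j)` is the cell in row `i+1`, column `j+1`. -/
def cells (μ : Partition') : Set (ℕ × ℕ) := {c | c.2 < μ.parts c.1}

/-- The size `|μ|` of a partition: the number of cells of its Young diagram. -/
noncomputable def size (μ : Partition') : ℕ := μ.cells.ncard

/-- The arm length of a cell: the number of cells in its row strictly to its right. -/
def arm (μ : Partition') (c : ℕ × ℕ) : ℕ := μ.parts c.1 - (c.2 + 1)

/-- The leg length of a cell: the number of cells in its column strictly below it. -/
noncomputable def leg (μ : Partition') (c : ℕ × ℕ) : ℕ :=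
  {r : ℕ | c.1 < r ∧ c.2 < μ.parts r}.ncard

/-- The number of nonzero parts. -/
noncomputable def numParts (μ : Partition') : ℕ := {i : ℕ | μ.parts i ≠ 0}.ncard

end Partition'

/-- A partition has distinct parts if no nonzero part repeats. -/
def Partition'.distinctParts (μ : Partition') : Prop :=
  ∀ i, μ.parts i ≠ 0 → μ.parts (i + 1) < μ.parts i

/-- The staircase partition `Δ_k = (k, k-1, …, 2, 1)`. -/
noncomputable def staircase (k : ℕ) : Partition' where
  parts := fun i => k - i
  antitone := fun i j h => by show k - j ≤ k - i; omega
  finite_support := Set.Finite.subset (Set.finite_Iio k) (fun i hi => by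
    simp only [Function.mem_support] at hi
    exact Set.mem_Iio.mpr (by omega))

/-- A single domino removal: either one part decreases by `2`, or two equal consecutive
parts each decrease by `1`. -/
def DominoStep (lam mu : Partition') : Prop :=
  (∃ i, lam.parts i = mu.parts i + 2 ∧ ∀ j, j ≠ i → mu.parts j = lam.parts j) ∨
  (∃ i, lam.parts i = lam.parts (i + 1) ∧ lam.parts i = mu.parts i + 1 ∧
    lam.parts (i + 1) = mu.parts (i + 1) + 1 ∧
    ∀ j, j ≠ i → j ≠ i + 1 → mu.parts j = lam.parts j)

/-- `mu` is the 2-core of `lam`: it is obtained from `lam` by repeated domino removals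
and admits no further domino removal. -/
def TwoCoreOf (lam mu : Partition') : Prop :=
  Relation.ReflTransGen DominoStep lam mu ∧ ∀ ν, ¬ DominoStep mu ν

/-- The Gaussian binomial coefficient `[n choose k]_t`, a polynomial in `t` with
natural number coefficients (`0` when `k > n`). -/
noncomputable def gaussBinom : ℕ → ℕ → Polynomial ℕ
  | _, 0 => 1
  | 0, _ + 1 => 0
  | n + 1, k + 1 => gaussBinom n k + X ^ (k + 1) * gaussBinom n (k + 1)
  termination_by a _ => a

/-- The Gaussian binomial coefficient with integer entries: `0` if `b < 0` or `b > a`. -/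
noncomputable def gbinomZ (a b : ℤ) : Polynomial ℕ :=
  if 0 ≤ b ∧ b ≤ a then gaussBinom a.toNat b.toNat else 0


/-! ### Auxiliary development -/

section Aux

open Finset

namespace Partition'

theorem pext {mu nu : Partition'} (h : mu.parts = nu.parts) : mu = nu := by
  cases mu; cases nu; simpa using h

/-- The least index whose part is zero. -/
noncomputable def plen (mu : Partition') : ℕ := sInf {i | mu.parts i = 0}

theorem exists_parts_zero (mu : Partition') : ∃ i, mu.parts i = 0 := by
  by_contra h
  push_neg at h
  have hu : Function.support mu.parts = Set.univ := Set.eq_univ_of_forall h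
  have h2 := mu.finite_support
  rw [hu] at h2
  exact Set.infinite_univ h2

theorem parts_plen (mu : Partition') : mu.parts (plen mu) = 0 :=
  Nat.sInf_mem (mu.exists_parts_zero)

theorem parts_eq_zero_iff (mu : Partition') (i : ℕ) :
    mu.parts i = 0 ↔ plen mu ≤ i := by
  constructor
  · intro h; exact Nat.sInf_le h
  · intro h
    have := mu.antitone h
    rw [mu.parts_plen] at this
    omega

/-- The sum of the parts. -/
noncomputable def psum (mu : Partition') : ℕ := ∑ i ∈ Finset.range (plen mu), mu.parts i

theorem psum_eq (mu : Partition') {N : ℕ} (h : plen mu ≤ N) :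
    mu.psum = ∑ i ∈ Finset.range N, mu.parts i := by
  refine Finset.sum_subset (Finset.range_subset_range.2 h) (fun x _ hx => ?_)
  rw [Finset.mem_range] at hx
  rw [mu.parts_eq_zero_iff]; omega

/-- The row-contribution to the signed odd-row count. -/
def rc (i l : ℕ) : ℤ := if l % 2 = 1 then (-1) ^ i else 0

@[simp] theorem rc_zero (i : ℕ) : rc i 0 = 0 := by simp [rc]

theorem rc_succ (i l : ℕ) : rc (i + 1) l = -rc i l := by
  by_cases h : l % 2 = 1 <;> simp [rc, h, pow_succ]

theorem rc_two (i l : ℕ) : rc i (l + 2) = rc i l := by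
  unfold rc
  rw [Nat.add_mod_right]

theorem rc_add_self (i l : ℕ) : rc i l + rc (i + 1) l = 0 := by
  rw [rc_succ]; ring

/-- The signed count of odd rows: the domino invariant. -/
noncomputable def Dv (mu : Partition') : ℤ := ∑ i ∈ Finset.range (plen mu), rc i (mu.parts i)

theorem Dv_eq (mu : Partition') {N : ℕ} (h : plen mu ≤ N) :
    mu.Dv = ∑ i ∈ Finset.range N, rc i (mu.parts i) := by
  refine Finset.sum_subset (Finset.range_subset_range.2 h) (fun x _ hx => ?_)
  rw [Finset.mem_range] at hx
  have : mu.parts x = 0 := by rw [mu.parts_eq_zero_iff]; omega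
  rw [this, rc_zero]

/-- Remove the first part. -/
noncomputable def tail (mu : Partition') : Partition' where
  parts := fun i => mu.parts (i + 1)
  antitone := fun i j h => mu.antitone (by omega)
  finite_support := by
    have hsub : (Function.support fun i => mu.parts (i + 1)) ⊆
        (· + 1) ⁻¹' (Function.support mu.parts) := fun i hi => hi
    exact Set.Finite.subset (Set.Finite.preimage
      (Function.Injective.injOn (fun a b h => by omega)) mu.finite_support) hsub

@[simp] theorem tail_parts (mu : Partition') (i : ℕ) : mu.tail.parts i = mu.parts (i + 1) := rfl

theorem plen_tail_le (mu : Partition') : plen mu.tail ≤ plen mu := by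
  rw [← mu.tail.parts_eq_zero_iff, tail_parts, mu.parts_eq_zero_iff]
  omega

theorem psum_eq_head_add_tail (mu : Partition') : mu.psum = mu.parts 0 + mu.tail.psum := by
  rw [mu.psum_eq (Nat.le_succ_of_le le_rfl), Finset.sum_range_succ']
  rw [mu.tail.psum_eq mu.plen_tail_le]
  simp [add_comm]

theorem Dv_eq_head_sub_tail (mu : Partition') : mu.Dv = rc 0 (mu.parts 0) - mu.tail.Dv := by
  rw [mu.Dv_eq (Nat.le_succ_of_le le_rfl), Finset.sum_range_succ']
  rw [mu.tail.Dv_eq mu.plen_tail_le]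
  have : ∀ i ∈ Finset.range (plen mu), rc (i + 1) (mu.parts (i + 1))
      = -rc i (mu.tail.parts i) := by
    intro i _; rw [tail_parts, rc_succ]
  rw [Finset.sum_congr rfl this, Finset.sum_neg_distrib]
  ring

/-- Prepend a part. -/
noncomputable def consP (v : ℕ) (mu : Partition') : Partition' where
  parts := fun i => match i with
    | 0 => max v (mu.parts 0)
    | j + 1 => mu.parts j
  antitone := by
    intro i j hij
    match i, j with
    | 0, 0 => exact le_rfl
    | 0, j + 1 => exact le_trans (mu.antitone (Nat.zero_le j)) (le_max_right _ _)
    | i + 1, j + 1 => exact mu.antitone (by omega)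
  finite_support := by
    refine Set.Finite.subset ((Set.finite_singleton 0).union
      (mu.finite_support.image (· + 1))) ?_
    intro i hi
    match i with
    | 0 => exact Or.inl rfl
    | j + 1 => exact Or.inr ⟨j, hi, rfl⟩

@[simp] theorem consP_parts_zero (v : ℕ) (mu : Partition') :
    (consP v mu).parts 0 = max v (mu.parts 0) := rfl

@[simp] theorem consP_parts_succ (v : ℕ) (mu : Partition') (j : ℕ) :
    (consP v mu).parts (j + 1) = mu.parts j := rfl

@[simp] theorem tail_consP (v : ℕ) (mu : Partition') : (consP v mu).tail = mu := by
  apply pext; funext i; rfl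

theorem consP_tail (mu : Partition') : consP (mu.parts 0) mu.tail = mu := by
  apply pext; funext i
  match i with
  | 0 =>
    show max (mu.parts 0) (mu.parts 1) = mu.parts 0
    exact max_eq_left (mu.antitone (Nat.zero_le 1))
  | j + 1 => rfl

theorem psum_consP (v : ℕ) (mu : Partition') (h : mu.parts 0 ≤ v) :
    (consP v mu).psum = v + mu.psum := by
  rw [(consP v mu).psum_eq_head_add_tail, tail_consP, consP_parts_zero, max_eq_left h]

theorem Dv_consP (v : ℕ) (mu : Partition') (h : mu.parts 0 ≤ v) :
    (consP v mu).Dv = rc 0 v - mu.Dv := by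
  rw [(consP v mu).Dv_eq_head_sub_tail, tail_consP, consP_parts_zero, max_eq_left h]

/-- The empty partition. -/
noncomputable def pzero : Partition' where
  parts := fun _ => 0
  antitone := fun _ _ _ => le_rfl
  finite_support := Set.Finite.subset Set.finite_empty (by simp [Function.support])

@[simp] theorem pzero_parts (i : ℕ) : pzero.parts i = 0 := rfl

theorem plen_pzero : plen pzero = 0 := by
  have := (pzero.parts_eq_zero_iff 0).1 rfl
  omega

@[simp] theorem psum_pzero : pzero.psum = 0 := by
  rw [pzero.psum_eq (N := 0) (by rw [plen_pzero])]; simp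

@[simp] theorem Dv_pzero : pzero.Dv = 0 := by
  rw [pzero.Dv_eq (N := 0) (by rw [plen_pzero])]; simp

theorem eq_pzero_of_parts_zero {mu : Partition'} (h : mu.parts 0 = 0) : mu = pzero := by
  apply pext; funext i
  have := mu.antitone (Nat.zero_le i)
  simpa [h] using (by omega : mu.parts i = 0)

theorem parts_zero_le_psum (mu : Partition') : mu.parts 0 ≤ mu.psum := by
  rw [mu.psum_eq_head_add_tail]; omega

end Partition'

end Aux


/-! ### Chunk 2: invariants and the two-core characterization -/

section Aux2

def Tn : ℕ → ℕ
  | 0 => 0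
  | a + 1 => Tn a + (a + 1)

theorem Tn_eq (a : ℕ) : Tn a = a * (a + 1) / 2 := by
  induction a with
  | zero => rfl
  | succ a ih =>
    obtain ⟨c, hc⟩ : 2 ∣ a * (a + 1) := (Nat.even_mul_succ_self a).two_dvd
    have h2 : (a + 1) * (a + 2) = 2 * (c + (a + 1)) := by nlinarith [hc]
    show Tn a + (a + 1) = (a + 1) * (a + 1 + 1) / 2
    rw [ih, hc, show a + 1 + 1 = a + 2 from rfl, h2,
      Nat.mul_div_cancel_left _ (by norm_num : 0 < 2),
      Nat.mul_div_cancel_left _ (by norm_num : 0 < 2)]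

def dval (a : ℕ) : ℤ := if a % 2 = 0 then -((a : ℤ) / 2) else ((a : ℤ) + 1) / 2

def epar (m : ℕ) : ℤ := if m % 2 = 1 then 1 else 0

theorem dval_inj {a b : ℕ} (h : dval a = dval b) : a = b := by
  unfold dval at h; split_ifs at h <;> omega

namespace Partition'

theorem rc_zero_eq_epar (v : ℕ) : rc 0 v = epar v := by simp [rc, epar]

theorem size_eq_psum (mu : Partition') : mu.size = mu.psum := by
  have hc : mu.cells = ↑((Finset.range (plen mu)).biUnion
      (fun i => ({i} : Finset ℕ) ×ˢ Finset.range (mu.parts i))) := by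
    ext ⟨i, j⟩
    simp only [Partition'.cells, Set.mem_setOf_eq, Finset.coe_biUnion, Set.mem_iUnion,
      Finset.mem_coe, Finset.mem_range, Finset.mem_product, Finset.mem_singleton]
    constructor
    · intro h
      refine ⟨i, ?_, rfl, h⟩
      by_contra hle
      have : mu.parts i = 0 := (mu.parts_eq_zero_iff i).2 (by omega)
      omega
    · rintro ⟨x, hx, rfl, hj⟩
      exact hj
  rw [Partition'.size, hc, Set.ncard_coe_finset, Finset.card_biUnion]
  · refine Finset.sum_congr rfl fun i _ => ?_
    rw [Finset.card_product, Finset.card_singleton, Finset.card_range, one_mul]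
  · intro x _ y _ hxy
    simp only [Finset.disjoint_left, Finset.mem_product, Finset.mem_singleton]
    rintro ⟨p, q⟩ ⟨h1, -⟩ ⟨h2, -⟩
    exact hxy (h1 ▸ h2 ▸ rfl)

end Partition'

theorem DominoStep.parts_le {l m : Partition'} (h : DominoStep l m) (j : ℕ) :
    m.parts j ≤ l.parts j := by
  rcases h with ⟨i, hi, hoth⟩ | ⟨i, he, hi1, hi2, hoth⟩
  · by_cases hj : j = i
    · subst hj; omega
    · rw [hoth j hj]
  · by_cases hj : j = i
    · subst hj; omega
    · by_cases hj2 : j = i + 1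
      · subst hj2; omega
      · rw [hoth j hj hj2]

theorem DominoStep.plen_le {l m : Partition'} (h : DominoStep l m) :
    Partition'.plen m ≤ Partition'.plen l := by
  rw [← m.parts_eq_zero_iff]
  have h1 := h.parts_le (Partition'.plen l)
  have h2 := l.parts_plen
  omega

theorem DominoStep.psum_eq {l m : Partition'} (h : DominoStep l m) :
    l.psum = m.psum + 2 := by
  rw [l.psum_eq (le_refl (Partition'.plen l)), m.psum_eq h.plen_le]
  rcases h with ⟨i, hi, hoth⟩ | ⟨i, he, hi1, hi2, hoth⟩
  · have hiN : i ∈ Finset.range (Partition'.plen l) := by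
      rw [Finset.mem_range]
      by_contra hc
      have : l.parts i = 0 := (l.parts_eq_zero_iff i).2 (by omega)
      omega
    rw [← Finset.sum_erase_add _ _ hiN, ← Finset.sum_erase_add _ _ hiN]
    have hs : ∑ x ∈ (Finset.range (Partition'.plen l)).erase i, l.parts x
        = ∑ x ∈ (Finset.range (Partition'.plen l)).erase i, m.parts x :=
      Finset.sum_congr rfl fun x hx => (hoth x (Finset.ne_of_mem_erase hx)).symm
    omega
  · have hiN : i ∈ Finset.range (Partition'.plen l) := by
      rw [Finset.mem_range]
      by_contra hc
      have : l.parts i = 0 := (l.parts_eq_zero_iff i).2 (by omega)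
      omega
    have hi1N : i + 1 ∈ (Finset.range (Partition'.plen l)).erase i := by
      rw [Finset.mem_erase, Finset.mem_range]
      rw [Finset.mem_range] at hiN
      constructor
      · omega
      · by_contra hc
        have : l.parts (i + 1) = 0 := (l.parts_eq_zero_iff (i + 1)).2 (by omega)
        omega
    rw [← Finset.sum_erase_add _ _ hiN, ← Finset.sum_erase_add _ _ hi1N,
      ← Finset.sum_erase_add _ _ hiN, ← Finset.sum_erase_add _ _ hi1N]
    have hs : ∑ x ∈ ((Finset.range (Partition'.plen l)).erase i).erase (i + 1), l.parts x
        = ∑ x ∈ ((Finset.range (Partition'.plen l)).erase i).erase (i + 1), m.parts x := by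
      refine Finset.sum_congr rfl fun x hx => ?_
      rw [Finset.mem_erase, Finset.mem_erase] at hx
      exact (hoth x hx.2.1 hx.1).symm
    omega

theorem DominoStep.dv_eq {l m : Partition'} (h : DominoStep l m) : l.Dv = m.Dv := by
  rw [l.Dv_eq (le_refl (Partition'.plen l)), m.Dv_eq h.plen_le]
  rcases h with ⟨i, hi, hoth⟩ | ⟨i, he, hi1, hi2, hoth⟩
  · by_cases hiN : i ∈ Finset.range (Partition'.plen l)
    · rw [← Finset.sum_erase_add _ _ hiN, ← Finset.sum_erase_add _ _ hiN]
      have hs : ∑ x ∈ (Finset.range (Partition'.plen l)).erase i, Partition'.rc x (l.parts x)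
          = ∑ x ∈ (Finset.range (Partition'.plen l)).erase i, Partition'.rc x (m.parts x) := by
        refine Finset.sum_congr rfl fun x hx => ?_
        rw [hoth x (Finset.ne_of_mem_erase hx)]
      rw [hs, hi, Partition'.rc_two]
    · refine Finset.sum_congr rfl fun x hx => ?_
      rw [hoth x (by rintro rfl; exact hiN hx)]
  · by_cases hiN : i ∈ Finset.range (Partition'.plen l)
    · have hi1N : i + 1 ∈ (Finset.range (Partition'.plen l)).erase i := by
        rw [Finset.mem_erase, Finset.mem_range]
        rw [Finset.mem_range] at hiN
        refine ⟨by omega, ?_⟩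
        by_contra hc
        have h0 : l.parts (i + 1) = 0 := (l.parts_eq_zero_iff (i + 1)).2 (by omega)
        omega
      rw [← Finset.sum_erase_add _ _ hiN, ← Finset.sum_erase_add _ _ hi1N,
        ← Finset.sum_erase_add _ _ hiN, ← Finset.sum_erase_add _ _ hi1N]
      have hs : ∑ x ∈ ((Finset.range (Partition'.plen l)).erase i).erase (i + 1),
            Partition'.rc x (l.parts x)
          = ∑ x ∈ ((Finset.range (Partition'.plen l)).erase i).erase (i + 1),
            Partition'.rc x (m.parts x) := by
        refine Finset.sum_congr rfl fun x hx => ?_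
        rw [Finset.mem_erase, Finset.mem_erase] at hx
        rw [hoth x hx.2.1 hx.1]
      have hv : l.parts (i + 1) = l.parts i := he.symm
      have hm : m.parts (i + 1) = m.parts i := by omega
      rw [hs, hv, hm]
      have t1 := Partition'.rc_add_self i (l.parts i)
      have t2 := Partition'.rc_add_self i (m.parts i)
      omega
    · refine Finset.sum_congr rfl fun x hx => ?_
      rw [Finset.mem_range] at hiN hx
      rw [hoth x (by omega) (by omega)]

theorem rtg_dv {l m : Partition'} (h : Relation.ReflTransGen DominoStep l m) :
    l.Dv = m.Dv := by
  induction h with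
  | refl => rfl
  | tail _ hstep ih => exact ih.trans hstep.dv_eq

theorem staircase_parts (k i : ℕ) : (staircase k).parts i = k - i := rfl

theorem tail_staircase (a : ℕ) : (staircase (a + 1)).tail = staircase a := by
  apply Partition'.pext; funext i
  show (a + 1) - (i + 1) = a - i
  omega

theorem staircase_zero : staircase 0 = Partition'.pzero := by
  apply Partition'.pext; funext i
  show 0 - i = 0
  omega

theorem psum_staircase (a : ℕ) : (staircase a).psum = Tn a := by
  induction a with
  | zero => rw [staircase_zero]; simp [Tn]
  | succ a ih =>
    rw [(staircase (a + 1)).psum_eq_head_add_tail, tail_staircase, ih,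
      staircase_parts]
    show (a + 1) - 0 + Tn a = Tn a + (a + 1)
    omega

theorem dv_staircase (a : ℕ) : (staircase a).Dv = dval a := by
  induction a with
  | zero => rw [staircase_zero]; simp [Partition'.Dv_pzero, dval]
  | succ a ih =>
    rw [(staircase (a + 1)).Dv_eq_head_sub_tail, tail_staircase, ih, staircase_parts]
    rw [show (a + 1) - 0 = a + 1 from rfl]
    simp only [Partition'.rc, pow_zero, dval]
    split_ifs <;> push_cast <;> omega

theorem staircase_no_step (a : ℕ) (nu : Partition') : ¬ DominoStep (staircase a) nu := by
  rintro (⟨i, hi, hoth⟩ | ⟨i, he, hi1, hi2, hoth⟩)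
  · have h1 : (staircase a).parts i = a - i := rfl
    have h2 : nu.parts (i + 1) = (staircase a).parts (i + 1) := hoth (i + 1) (by omega)
    have h3 : (staircase a).parts (i + 1) = a - (i + 1) := rfl
    have h4 := nu.antitone (show i ≤ i + 1 by omega)
    omega
  · have h1 : (staircase a).parts i = a - i := rfl
    have h3 : (staircase a).parts (i + 1) = a - (i + 1) := rfl
    omega

theorem exists_step_horiz (mu : Partition') (i : ℕ)
    (h : mu.parts (i + 1) + 2 ≤ mu.parts i) : ∃ nu, DominoStep mu nu := by
  refine ⟨⟨fun j => if j = i then mu.parts i - 2 else mu.parts j, ?_, ?_⟩, ?_⟩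
  · intro p q hpq
    by_cases hq : q = i <;> by_cases hp : p = i
    · rw [if_pos hq, if_pos hp]
    · rw [if_pos hq, if_neg hp]
      have := mu.antitone hpq
      subst hq
      omega
    · rw [if_neg hq, if_pos hp]
      have := mu.antitone (show i + 1 ≤ q by omega)
      omega
    · rw [if_neg hq, if_neg hp]
      exact mu.antitone hpq
  · refine Set.Finite.subset mu.finite_support ?_
    intro j hj
    simp only [Function.mem_support] at hj ⊢
    by_cases hji : j = i
    · subst hji; simp only [if_pos rfl] at hj; omega
    · simpa [hji] using hj
  · left
    refine ⟨i, ?_, fun j hj => by simp [hj]⟩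
    show mu.parts i = (if i = i then mu.parts i - 2 else mu.parts i) + 2
    rw [if_pos rfl]
    omega

theorem exists_step_vert (mu : Partition') (r : ℕ)
    (h1 : mu.parts r = mu.parts (r + 1)) (h2 : mu.parts (r + 2) < mu.parts (r + 1)) :
    ∃ nu, DominoStep mu nu := by
  refine ⟨⟨fun j => if j = r ∨ j = r + 1 then mu.parts j - 1 else mu.parts j, ?_, ?_⟩, ?_⟩
  · intro p q hpq
    by_cases hq : q = r ∨ q = r + 1 <;> by_cases hp : p = r ∨ p = r + 1
    · rw [if_pos hq, if_pos hp]
      have := mu.antitone hpq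
      omega
    · rw [if_pos hq, if_neg hp]
      have := mu.antitone hpq
      omega
    · rw [if_neg hq, if_pos hp]
      have ha := mu.antitone (show r + 2 ≤ q by omega)
      have hb := mu.antitone (show p ≤ r + 1 by omega)
      omega
    · rw [if_neg hq, if_neg hp]
      exact mu.antitone hpq
  · refine Set.Finite.subset mu.finite_support ?_
    intro j hj
    simp only [Function.mem_support] at hj ⊢
    by_cases hjr : j = r ∨ j = r + 1
    · simp only [if_pos hjr] at hj; omega
    · simpa [hjr] using hj
  · right
    refine ⟨r, h1, ?_, ?_, ?_⟩
    · show mu.parts r = (if r = r ∨ r = r + 1 then mu.parts r - 1 else mu.parts r) + 1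
      rw [if_pos (show r = r ∨ r = r + 1 from Or.inl rfl)]
      omega
    · show mu.parts (r + 1) =
        (if r + 1 = r ∨ r + 1 = r + 1 then mu.parts (r + 1) - 1 else mu.parts (r + 1)) + 1
      rw [if_pos (show r + 1 = r ∨ r + 1 = r + 1 from Or.inr rfl)]
      omega
    · intro j hj1 hj2
      simp only [if_neg (by tauto : ¬(j = r ∨ j = r + 1))]

theorem exists_step_or_staircase (mu : Partition') :
    (∃ nu, DominoStep mu nu) ∨ mu = staircase (mu.parts 0) := by
  by_cases hA : ∃ i, mu.parts (i + 1) + 2 ≤ mu.parts i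
  · obtain ⟨i, hi⟩ := hA
    exact Or.inl (exists_step_horiz mu i hi)
  by_cases hB : ∃ i, mu.parts i = mu.parts (i + 1) ∧ mu.parts i ≠ 0
  · obtain ⟨i, he, hne⟩ := hB
    have hex : ∃ t, mu.parts (i + 1 + t) < mu.parts i := by
      refine ⟨Partition'.plen mu, ?_⟩
      have hp := mu.parts_plen
      have := mu.antitone (show Partition'.plen mu ≤ i + 1 + Partition'.plen mu by omega)
      omega
    have htp := Nat.find_spec hex
    set t := Nat.find hex with ht
    have ht1 : 1 ≤ t := by
      rcases Nat.eq_zero_or_pos t with h0 | h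
      · rw [h0] at htp
        simp only [Nat.add_zero] at htp
        omega
      · exact h
    have hr1 : mu.parts (i + t) = mu.parts i := by
      have hmin := Nat.find_min hex (show t - 1 < t by omega)
      have heq : i + 1 + (t - 1) = i + t := by omega
      rw [heq] at hmin
      have := mu.antitone (show i ≤ i + t by omega)
      omega
    have hr0 : mu.parts (i + t - 1) = mu.parts i := by
      have ha := mu.antitone (show i ≤ i + t - 1 by omega)
      have hb := mu.antitone (show i + t - 1 ≤ i + t by omega)
      omega
    refine Or.inl (exists_step_vert mu (i + t - 1) ?_ ?_)
    · have heq : i + t - 1 + 1 = i + t := by omega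
      rw [heq, hr0, hr1]
    · have heq1 : i + t - 1 + 2 = i + 1 + t := by omega
      have heq2 : i + t - 1 + 1 = i + t := by omega
      rw [heq1, heq2, hr1]
      exact htp
  · push_neg at hA hB
    right
    have key : ∀ j, mu.parts j = mu.parts 0 - j := by
      intro j
      induction j with
      | zero => omega
      | succ j ih =>
        have hAj := hA j
        have hmono := mu.antitone (show j ≤ j + 1 by omega)
        by_cases hc : mu.parts j = mu.parts (j + 1)
        · have := hB j hc
          omega
        · omega
    apply Partition'.pext; funext j
    rw [staircase_parts]
    exact key j

theorem exists_core_aux : ∀ n (mu : Partition'), mu.psum = n →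
    ∃ k, Relation.ReflTransGen DominoStep mu (staircase k) := by
  intro n
  induction n using Nat.strong_induction_on with
  | _ n ih =>
    intro mu hn
    rcases exists_step_or_staircase mu with ⟨nu, hstep⟩ | heq
    · have hps := hstep.psum_eq
      obtain ⟨k, hk⟩ := ih nu.psum (by omega) nu rfl
      exact ⟨k, Relation.ReflTransGen.head hstep hk⟩
    · exact ⟨mu.parts 0, heq ▸ Relation.ReflTransGen.refl⟩

theorem twoCoreOf_staircase_iff (mu : Partition') (a : ℕ) :
    TwoCoreOf mu (staircase a) ↔ mu.Dv = dval a := by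
  constructor
  · rintro ⟨hr, -⟩
    rw [rtg_dv hr, dv_staircase]
  · intro h
    obtain ⟨k, hk⟩ := exists_core_aux mu.psum mu rfl
    have hdk : dval k = dval a := by
      rw [← dv_staircase, ← rtg_dv hk, h]
    obtain rfl := dval_inj hdk
    exact ⟨hk, fun nu => staircase_no_step k nu⟩

end Aux2


/-! ### Chunk 3: Gaussian binomial lemmas -/

section Aux3

theorem gauss_zero (n : ℕ) : gaussBinom n 0 = 1 := by
  cases n <;> rw [gaussBinom]

theorem gauss_succ (n k : ℕ) :
    gaussBinom (n + 1) (k + 1) = gaussBinom n k + X ^ (k + 1) * gaussBinom n (k + 1) := by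
  rw [gaussBinom]

theorem gauss_of_lt : ∀ {n k : ℕ}, n < k → gaussBinom n k = 0 := by
  intro n
  induction n with
  | zero =>
    intro k hk
    match k, hk with
    | k + 1, _ => rw [gaussBinom]
  | succ n ih =>
    intro k hk
    match k, hk with
    | k + 1, hk =>
      rw [gauss_succ, ih (by omega), ih (by omega)]
      simp

theorem gauss_diag (n : ℕ) : gaussBinom n n = 1 := by
  induction n with
  | zero => rw [gaussBinom]
  | succ n ih => rw [gauss_succ, ih, gauss_of_lt (by omega)]; simp

theorem gauss_dual : ∀ (n k : ℕ),
    gaussBinom (n + 1) (k + 1) = X ^ (n - k) * gaussBinom n k + gaussBinom n (k + 1) := by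
  intro n
  induction n with
  | zero =>
    intro k
    match k with
    | 0 => rw [gauss_succ, gauss_zero]; simp [gauss_of_lt]
    | k + 1 =>
      rw [gauss_succ, gauss_of_lt (show 0 < k + 1 by omega),
        gauss_of_lt (show 0 < k + 2 by omega)]
      simp
  | succ n ih =>
    intro k
    match k with
    | 0 =>
      rw [show n + 1 - 0 = n + 1 from rfl]
      conv_lhs => rw [gauss_succ]
      conv_lhs => rw [ih 0]
      conv_rhs => rw [gauss_succ]
      rw [gauss_zero, gauss_zero, Nat.sub_zero]
      ring
    | k + 1 =>
      rw [show n + 1 - (k + 1) = n - k by omega]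
      rw [gauss_succ (n + 1) (k + 1)]
      conv_lhs => rw [ih k, ih (k + 1)]
      conv_rhs => rw [gauss_succ n k, gauss_succ n (k + 1)]
      rcases le_or_gt (k + 1) n with hkn | hkn
      · have hpow : (X : Polynomial ℕ) ^ (k + 1 + 1) * X ^ (n - (k + 1))
            = X ^ (n - k) * X ^ (k + 1) := by
          rw [← pow_add, ← pow_add]
          congr 1
          omega
        calc X ^ (n - k) * gaussBinom n k + gaussBinom n (k + 1) +
              X ^ (k + 1 + 1) * (X ^ (n - (k + 1)) * gaussBinom n (k + 1) + gaussBinom n (k + 2))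
            = X ^ (n - k) * gaussBinom n k + gaussBinom n (k + 1) +
              ((X ^ (k + 1 + 1) * X ^ (n - (k + 1))) * gaussBinom n (k + 1) +
                X ^ (k + 1 + 1) * gaussBinom n (k + 2)) := by ring
          _ = X ^ (n - k) * (gaussBinom n k + X ^ (k + 1) * gaussBinom n (k + 1)) +
              (gaussBinom n (k + 1) + X ^ (k + 1 + 1) * gaussBinom n (k + 2)) := by
              rw [hpow]; ring
      · rw [gauss_of_lt hkn, gauss_of_lt (show n < k + 2 by omega)]
        ring

theorem gauss_symm : ∀ (n k : ℕ), k ≤ n → gaussBinom n (n - k) = gaussBinom n k := by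
  intro n
  induction n with
  | zero =>
    intro k hk
    match k, hk with
    | 0, _ => rfl
  | succ n ih =>
    intro k hk
    match k, hk with
    | 0, _ => rw [show n + 1 - 0 = n + 1 from rfl, gauss_diag, gauss_zero]
    | j + 1, hk =>
      rcases Nat.lt_or_ge j n with hj | hj
      · have hm : n + 1 - (j + 1) = (n - (j + 1)) + 1 := by omega
        rw [hm, gauss_succ, ih (j + 1) (by omega),
          show n - (j + 1) + 1 = n - j by omega, ih j (by omega), gauss_dual n j]
        ring
      · obtain rfl : n = j := by omega
        rw [show n + 1 - (n + 1) = 0 by omega, gauss_zero, gauss_diag]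

end Aux3


/-! ### Chunk 4: counting sets -/

section Aux4

def Sset (b : ℕ) (c : ℤ) (n : ℕ) : Set Partition' :=
  {mu | mu.psum = n ∧ mu.distinctParts ∧ mu.parts 0 ≤ b ∧ mu.Dv = c}

theorem Sset_zero_ncard (c : ℤ) (n : ℕ) :
    (Sset 0 c n).ncard = if n = 0 ∧ c = 0 then 1 else 0 := by
  split_ifs with h
  · obtain ⟨rfl, rfl⟩ := h
    have : Sset 0 0 0 = {Partition'.pzero} := by
      ext mu
      simp only [Sset, Set.mem_setOf_eq, Set.mem_singleton_iff]
      constructor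
      · rintro ⟨-, -, h3, -⟩
        exact Partition'.eq_pzero_of_parts_zero (by omega)
      · rintro rfl
        refine ⟨Partition'.psum_pzero, ?_, le_rfl, Partition'.Dv_pzero⟩
        intro i hi
        simp at hi
    rw [this, Set.ncard_singleton]
  · have : Sset 0 c n = ∅ := by
      ext mu
      simp only [Sset, Set.mem_setOf_eq, Set.mem_empty_iff_false, iff_false]
      rintro ⟨h1, -, h3, h4⟩
      have hz : mu = Partition'.pzero := Partition'.eq_pzero_of_parts_zero (by omega)
      subst hz
      rw [Partition'.psum_pzero] at h1
      rw [Partition'.Dv_pzero] at h4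
      exact h ⟨h1.symm, h4.symm⟩
    rw [this, Set.ncard_empty]

theorem tail_mem_Sset {b : ℕ} {c : ℤ} {n : ℕ} {mu : Partition'}
    (hm : mu ∈ Sset (b + 1) c n) (hb : mu.parts 0 = b + 1) :
    mu.tail ∈ Sset b (epar (b + 1) - c) (n - (b + 1)) ∧ b + 1 ≤ n := by
  obtain ⟨h1, h2, h3, h4⟩ := hm
  have hps := mu.psum_eq_head_add_tail
  have hDv := mu.Dv_eq_head_sub_tail
  rw [hb] at hps hDv
  rw [Partition'.rc_zero_eq_epar] at hDv
  have hd0 : mu.parts 1 < mu.parts 0 := h2 0 (by omega)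
  refine ⟨⟨by omega, fun i hi => h2 (i + 1) hi, ?_, by omega⟩, by omega⟩
  show mu.parts 1 ≤ b
  omega

theorem consP_mem_Sset {b : ℕ} {c : ℤ} {n : ℕ} {nu : Partition'} (hn : b + 1 ≤ n)
    (hm : nu ∈ Sset b (epar (b + 1) - c) (n - (b + 1))) :
    Partition'.consP (b + 1) nu ∈ Sset (b + 1) c n ∧
      (Partition'.consP (b + 1) nu).parts 0 = b + 1 := by
  obtain ⟨h1, h2, h3, h4⟩ := hm
  have h0 : nu.parts 0 ≤ b + 1 := by omega
  have hps := Partition'.psum_consP (b + 1) nu h0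
  have hDv := Partition'.Dv_consP (b + 1) nu h0
  rw [Partition'.rc_zero_eq_epar] at hDv
  have hp0 : (Partition'.consP (b + 1) nu).parts 0 = b + 1 := by
    rw [Partition'.consP_parts_zero, max_eq_left h0]
  refine ⟨⟨by omega, ?_, by omega, by omega⟩, hp0⟩
  intro i hi
  match i with
  | 0 =>
    rw [hp0, Partition'.consP_parts_succ]
    omega
  | j + 1 =>
    rw [Partition'.consP_parts_succ] at hi ⊢
    rw [Partition'.consP_parts_succ]
    exact h2 j hi

theorem consP_injective (v : ℕ) : Function.Injective (Partition'.consP v) := by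
  intro x y h
  rw [← Partition'.tail_consP v x, ← Partition'.tail_consP v y, h]

theorem Sset_split_small {b : ℕ} {c : ℤ} {n : ℕ} (hn : n < b + 1) :
    Sset (b + 1) c n = Sset b c n := by
  ext mu
  simp only [Sset, Set.mem_setOf_eq]
  constructor
  · rintro ⟨h1, h2, h3, h4⟩
    refine ⟨h1, h2, ?_, h4⟩
    have := mu.parts_zero_le_psum
    omega
  · rintro ⟨h1, h2, h3, h4⟩
    exact ⟨h1, h2, by omega, h4⟩

theorem Sset_split_big {b : ℕ} {c : ℤ} {n : ℕ} (hn : b + 1 ≤ n) :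
    Sset (b + 1) c n = Sset b c n ∪
      (Partition'.consP (b + 1)) '' Sset b (epar (b + 1) - c) (n - (b + 1)) := by
  ext mu
  constructor
  · intro hm
    rcases le_or_gt (mu.parts 0) b with hb | hb
    · left
      obtain ⟨h1, h2, h3, h4⟩ := hm
      exact ⟨h1, h2, hb, h4⟩
    · right
      have hb' : mu.parts 0 = b + 1 := by
        obtain ⟨-, -, h3, -⟩ := hm
        omega
      refine ⟨mu.tail, (tail_mem_Sset hm hb').1, ?_⟩
      rw [← hb']
      exact mu.consP_tail
  · rintro (⟨h1, h2, h3, h4⟩ | ⟨nu, hnu, rfl⟩)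
    · exact ⟨h1, h2, by omega, h4⟩
    · exact (consP_mem_Sset hn hnu).1

theorem Sset_finite : ∀ (b : ℕ) (c : ℤ) (n : ℕ), (Sset b c n).Finite := by
  intro b
  induction b with
  | zero =>
    intro c n
    refine Set.Finite.subset (Set.finite_singleton Partition'.pzero) ?_
    rintro mu ⟨-, -, h3, -⟩
    exact Partition'.eq_pzero_of_parts_zero (by omega)
  | succ b ih =>
    intro c n
    rcases le_or_gt (b + 1) n with h | h
    · rw [Sset_split_big h]
      exact (ih c n).union ((ih _ _).image _)
    · rw [Sset_split_small h]
      exact ih c n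

theorem Sset_ncard_succ (b : ℕ) (c : ℤ) (n : ℕ) :
    (Sset (b + 1) c n).ncard = (Sset b c n).ncard +
      (if b + 1 ≤ n then (Sset b (epar (b + 1) - c) (n - (b + 1))).ncard else 0) := by
  split_ifs with h
  · rw [Sset_split_big h, Set.ncard_union_eq ?disj (Sset_finite b c n)
      ((Sset_finite _ _ _).image _), Set.ncard_image_of_injective _ (consP_injective (b + 1))]
    case disj =>
      rw [Set.disjoint_left]
      rintro mu ⟨-, -, h3, -⟩ ⟨nu, hnu, rfl⟩
      have := (consP_mem_Sset h hnu).2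
      omega
  · rw [Sset_split_small (by omega), add_zero]

end Aux4


/-! ### Chunk 5: the coefficient function and final assembly -/

section Aux5

noncomputable def Ff (A b n : ℕ) : ℕ :=
  if A ≤ b ∧ Tn A ≤ n ∧ (n - Tn A) % 2 = 0
  then (gaussBinom b ((b - A) / 2)).coeff ((n - Tn A) / 2) else 0

def flipA (m A : ℕ) : ℕ :=
  if m % 2 = 1 then (if A % 2 = 0 then A + 1 else A - 1)
  else (if A % 2 = 0 then A - 1 else A + 1)

def ainv (c : ℤ) : ℕ := if 0 < c then (2 * c - 1).toNat else (2 * -c).toNat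

theorem ainv_dval (a : ℕ) : ainv (dval a) = a := by
  unfold ainv dval; split_ifs <;> omega

theorem dval_ainv (c : ℤ) : dval (ainv c) = c := by
  unfold ainv dval; split_ifs <;> omega

theorem flipA_spec (m A : ℕ) : dval (flipA m A) = epar m - dval A := by
  unfold dval flipA epar
  split_ifs <;> omega

theorem ainv_epar_sub (m : ℕ) (c : ℤ) : ainv (epar m - c) = flipA m (ainv c) := by
  conv_lhs => rw [← dval_ainv c, ← flipA_spec, ainv_dval]

theorem Ff_of_gt {A b : ℕ} (h : b < A) (n : ℕ) : Ff A b n = 0 := by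
  unfold Ff
  rw [if_neg]
  rintro ⟨h1, -, -⟩
  omega

theorem coeff_split {P Q R : Polynomial ℕ} {d : ℕ} (h : P = Q + X ^ d * R) (m : ℕ) :
    P.coeff m = Q.coeff m + if d ≤ m then R.coeff (m - d) else 0 := by
  rw [h, Polynomial.coeff_add, Polynomial.coeff_X_pow_mul']

theorem flipA_eq_add (b A : ℕ) (h : A % 2 = b % 2) : flipA (b + 1) A = A + 1 := by
  unfold flipA; split_ifs <;> omega

theorem flipA_eq_sub (b A : ℕ) (h : A % 2 ≠ b % 2) : flipA (b + 1) A = A - 1 := by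
  unfold flipA; split_ifs <;> omega

theorem Ff_rec (A b n : ℕ) :
    Ff A (b + 1) n = Ff A b n +
      (if b + 1 ≤ n then Ff (flipA (b + 1) A) b (n - (b + 1)) else 0) := by
  rcases eq_or_ne (A % 2) (b % 2) with hpar | hpar
  · -- A' = A + 1
    rw [flipA_eq_add b A hpar]
    rcases Nat.lt_or_ge b A with hAb | hAb
    · -- A ≥ b + 2
      rw [Ff_of_gt (show b + 1 < A by omega), Ff_of_gt (show b < A by omega),
        Ff_of_gt (show b < A + 1 by omega)]
      simp
    rcases eq_or_ne A b with heq | hne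
    · -- A = b
      rw [Ff_of_gt (show b < A + 1 by omega)]
      unfold Ff
      rw [show (b + 1 - A) / 2 = 0 by omega, show (b - A) / 2 = 0 by omega,
        gauss_zero, gauss_zero]
      have h0 : (if b + 1 ≤ n then (0:ℕ) else 0) = 0 := by split_ifs <;> rfl
      rw [h0, add_zero]
      split_ifs <;> first | rfl | omega
    · -- A + 2 ≤ b, dual Pascal
      have hAb2 : A + 2 ≤ b := by omega
      have hTs : Tn (A + 1) = Tn A + (A + 1) := rfl
      set k := (b - A) / 2 with hk
      have hk1 : 1 ≤ k := by omega
      have hkb : k ≤ b := by omega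
      have hPascal : gaussBinom (b + 1) ((b + 1 - A) / 2)
          = gaussBinom b ((b - A) / 2) + X ^ (b + 1 - k) * gaussBinom b ((b - (A + 1)) / 2) := by
        have h3 := gauss_dual b (k - 1)
        rw [show k - 1 + 1 = k by omega, show b - (k - 1) = b + 1 - k by omega] at h3
        rw [show (b + 1 - A) / 2 = k by omega, show (b - (A + 1)) / 2 = k - 1 by omega, h3]
        ring
      unfold Ff
      by_cases hg : Tn A ≤ n ∧ (n - Tn A) % 2 = 0
      · have hg1 : A ≤ b + 1 ∧ Tn A ≤ n ∧ (n - Tn A) % 2 = 0 := ⟨by omega, hg.1, hg.2⟩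
        have hg2 : A ≤ b ∧ Tn A ≤ n ∧ (n - Tn A) % 2 = 0 := ⟨by omega, hg.1, hg.2⟩
        rw [if_pos hg1, if_pos hg2, coeff_split hPascal]
        congr 1
        by_cases h2 : b + 1 ≤ n ∧ Tn (A + 1) + (b + 1) ≤ n
        · rw [if_pos (show b + 1 - k ≤ (n - Tn A) / 2 by omega), if_pos h2.1,
            if_pos (show A + 1 ≤ b ∧ Tn (A + 1) ≤ n - (b + 1) ∧
              (n - (b + 1) - Tn (A + 1)) % 2 = 0 from ⟨by omega, by omega, by omega⟩)]
          congr 1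
          omega
        · rw [if_neg (show ¬ (b + 1 - k ≤ (n - Tn A) / 2) by omega)]
          by_cases h3 : b + 1 ≤ n
          · rw [if_pos h3, if_neg]
            rintro ⟨-, hx, -⟩
            omega
          · rw [if_neg h3]
      · rw [if_neg (fun hc => hg ⟨hc.2.1, hc.2.2⟩), if_neg (fun hc => hg ⟨hc.2.1, hc.2.2⟩)]
        rw [zero_add]
        by_cases h3 : b + 1 ≤ n
        · rw [if_pos h3, if_neg]
          rintro ⟨-, hx, hp⟩
          exact hg ⟨by omega, by omega⟩
        · rw [if_neg h3]
  · -- A' = A - 1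
    rw [flipA_eq_sub b A hpar]
    rcases Nat.eq_zero_or_pos A with rfl | hA1
    · -- A = 0, b odd
      have hbodd : b % 2 = 1 := by omega
      have hT0 : Tn 0 = 0 := rfl
      have hT1 : Tn (0 - 1) = 0 := rfl
      set k := (b + 1) / 2 with hk
      have hk1 : 1 ≤ k := by omega
      have hkb : k ≤ b := by omega
      have hsymm : gaussBinom b k = gaussBinom b (k - 1) := by
        have := gauss_symm b k (by omega)
        rw [show b - k = k - 1 by omega] at this
        exact this.symm
      have hPascal : gaussBinom (b + 1) ((b + 1 - 0) / 2)
          = gaussBinom b ((b - 0) / 2) + X ^ k * gaussBinom b ((b - (0 - 1)) / 2) := by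
        have h3 := gauss_succ b (k - 1)
        rw [show k - 1 + 1 = k by omega] at h3
        rw [show (b + 1 - 0) / 2 = k by omega, show (b - 0) / 2 = k - 1 by omega]
        rw [h3, hsymm]
      unfold Ff
      by_cases hg : Tn 0 ≤ n ∧ (n - Tn 0) % 2 = 0
      · have hg1 : 0 ≤ b + 1 ∧ Tn 0 ≤ n ∧ (n - Tn 0) % 2 = 0 := ⟨by omega, hg.1, hg.2⟩
        have hg2 : 0 ≤ b ∧ Tn 0 ≤ n ∧ (n - Tn 0) % 2 = 0 := ⟨by omega, hg.1, hg.2⟩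
        rw [if_pos hg1, if_pos hg2, coeff_split hPascal]
        congr 1
        by_cases h2 : b + 1 ≤ n ∧ Tn (0 - 1) + (b + 1) ≤ n
        · rw [if_pos (show k ≤ (n - Tn 0) / 2 by omega), if_pos h2.1,
            if_pos (show 0 - 1 ≤ b ∧ Tn (0 - 1) ≤ n - (b + 1) ∧
              (n - (b + 1) - Tn (0 - 1)) % 2 = 0 from ⟨by omega, by omega, by omega⟩)]
          congr 1
          omega
        · rw [if_neg (show ¬ (k ≤ (n - Tn 0) / 2) by omega)]
          by_cases h3 : b + 1 ≤ n
          · rw [if_pos h3, if_neg]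
            rintro ⟨-, hx, -⟩
            omega
          · rw [if_neg h3]
      · rw [if_neg (fun hc => hg ⟨hc.2.1, hc.2.2⟩), if_neg (fun hc => hg ⟨hc.2.1, hc.2.2⟩)]
        rw [zero_add]
        by_cases h3 : b + 1 ≤ n
        · rw [if_pos h3, if_neg]
          rintro ⟨-, hx, hp⟩
          exact hg ⟨by omega, by omega⟩
        · rw [if_neg h3]
    · -- A ≥ 1
      obtain ⟨A0, rfl⟩ : ∃ A0, A = A0 + 1 := ⟨A - 1, by omega⟩
      have hTs : Tn (A0 + 1) = Tn A0 + (A0 + 1) := rfl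
      have hsub : A0 + 1 - 1 = A0 := rfl
      rw [hsub]
      rcases Nat.lt_or_ge (b + 1) (A0 + 1) with hAb | hAb
      · rw [Ff_of_gt (show b + 1 < A0 + 1 by omega), Ff_of_gt (show b < A0 + 1 by omega),
          Ff_of_gt (show b < A0 by omega)]
        simp
      rcases eq_or_ne (A0 + 1) (b + 1) with heq | hne
      · -- A = b + 1
        have hb0 : A0 = b := by omega
        subst hb0
        rw [Ff_of_gt (show A0 < A0 + 1 by omega)]
        unfold Ff
        rw [show (A0 + 1 - (A0 + 1)) / 2 = 0 by omega, show (A0 - A0) / 2 = 0 by omega,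
          gauss_zero, gauss_zero]
        simp only [Polynomial.coeff_one, zero_add]
        split_ifs <;> omega
      · -- 1 ≤ A ≤ b, Pascal
        have hAb2 : A0 + 1 ≤ b := by omega
        set k := (b + 1 - (A0 + 1)) / 2 with hk
        have hk1 : 1 ≤ k := by omega
        have hkb : k ≤ b := by omega
        have hPascal : gaussBinom (b + 1) ((b + 1 - (A0 + 1)) / 2)
            = gaussBinom b ((b - (A0 + 1)) / 2) + X ^ k * gaussBinom b ((b - A0) / 2) := by
          have h3 := gauss_succ b (k - 1)
          rw [show k - 1 + 1 = k by omega] at h3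
          rw [show (b + 1 - (A0 + 1)) / 2 = k by omega,
            show (b - (A0 + 1)) / 2 = k - 1 by omega,
            show (b - A0) / 2 = k by omega, h3]
        unfold Ff
        by_cases hg : Tn (A0 + 1) ≤ n ∧ (n - Tn (A0 + 1)) % 2 = 0
        · have hg1 : A0 + 1 ≤ b + 1 ∧ Tn (A0 + 1) ≤ n ∧ (n - Tn (A0 + 1)) % 2 = 0 :=
            ⟨by omega, hg.1, hg.2⟩
          have hg2 : A0 + 1 ≤ b ∧ Tn (A0 + 1) ≤ n ∧ (n - Tn (A0 + 1)) % 2 = 0 :=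
            ⟨by omega, hg.1, hg.2⟩
          rw [if_pos hg1, if_pos hg2, coeff_split hPascal]
          congr 1
          by_cases h2 : b + 1 ≤ n ∧ Tn A0 + (b + 1) ≤ n
          · rw [if_pos (show k ≤ (n - Tn (A0 + 1)) / 2 by omega), if_pos h2.1,
              if_pos (show A0 ≤ b ∧ Tn A0 ≤ n - (b + 1) ∧
                (n - (b + 1) - Tn A0) % 2 = 0 from ⟨by omega, by omega, by omega⟩)]
            congr 1
            omega
          · rw [if_neg (show ¬ (k ≤ (n - Tn (A0 + 1)) / 2) by omega)]
            by_cases h3 : b + 1 ≤ n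
            · rw [if_pos h3, if_neg]
              rintro ⟨-, hx, -⟩
              omega
            · rw [if_neg h3]
        · rw [if_neg (fun hc => hg ⟨hc.2.1, hc.2.2⟩), if_neg (fun hc => hg ⟨hc.2.1, hc.2.2⟩)]
          rw [zero_add]
          by_cases h3 : b + 1 ≤ n
          · rw [if_pos h3, if_neg]
            rintro ⟨-, hx, hp⟩
            exact hg ⟨by omega, by omega⟩
          · rw [if_neg h3]

theorem main_count : ∀ (b : ℕ) (c : ℤ) (n : ℕ), (Sset b c n).ncard = Ff (ainv c) b n := by
  intro b
  induction b with
  | zero =>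
    intro c n
    rw [Sset_zero_ncard]
    unfold Ff
    have hT0 : Tn 0 = 0 := rfl
    by_cases hc : c = 0
    · subst hc
      have h0 : ainv 0 = 0 := by unfold ainv; simp
      rw [h0]
      rw [show (0 - 0) / 2 = 0 by omega, gauss_zero]
      simp only [Polynomial.coeff_one, hT0, Nat.sub_zero, eq_self_iff_true, and_true,
        Nat.zero_le, true_and, le_refl]
      split_ifs <;> omega
    · have h0 : 1 ≤ ainv c := by
        unfold ainv
        split_ifs <;> omega
      rw [if_neg (by omega : ¬ (n = 0 ∧ c = 0)), if_neg]
      rintro ⟨hx, -, -⟩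
      omega
  | succ b ih =>
    intro c n
    rw [Sset_ncard_succ, ih, ih, ainv_epar_sub, Ff_rec]

end Aux5

theorem statement15 (a b n : ℕ) :
    {μ : Partition' | μ.size = n ∧ μ.distinctParts ∧ μ.parts 0 ≤ b ∧
        TwoCoreOf μ (staircase a)}.ncard =
      if a ≤ b ∧ a * (a + 1) / 2 ≤ n then
        ((gaussBinom b ((b - a) / 2)).comp (X ^ 2)).coeff (n - a * (a + 1) / 2)
      else 0 := by
  have hset : {μ : Partition' | μ.size = n ∧ μ.distinctParts ∧ μ.parts 0 ≤ b ∧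
      TwoCoreOf μ (staircase a)} = Sset b (dval a) n := by
    ext mu
    simp only [Set.mem_setOf_eq, Sset]
    constructor
    · rintro ⟨h1, h2, h3, h4⟩
      exact ⟨by rw [← mu.size_eq_psum]; exact h1, h2, h3, (twoCoreOf_staircase_iff mu a).1 h4⟩
    · rintro ⟨h1, h2, h3, h4⟩
      exact ⟨by rw [mu.size_eq_psum]; exact h1, h2, h3, (twoCoreOf_staircase_iff mu a).2 h4⟩
  rw [hset, main_count b (dval a) n, ainv_dval]
  unfold Ff
  rw [← Tn_eq a]
  have hcomp : ((gaussBinom b ((b - a) / 2)).comp (X ^ 2)).coeff (n - Tn a)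
      = if (n - Tn a) % 2 = 0 then (gaussBinom b ((b - a) / 2)).coeff ((n - Tn a) / 2)
        else 0 := by
    rw [← Polynomial.expand_eq_comp_X_pow, Polynomial.coeff_expand (by norm_num : 0 < 2)]
    congr 1
    simp [Nat.dvd_iff_mod_eq_zero]
  by_cases hg : a ≤ b ∧ Tn a ≤ n
  · rw [if_pos hg, hcomp]
    by_cases hp : (n - Tn a) % 2 = 0
    · rw [if_pos hp, if_pos (show a ≤ b ∧ Tn a ≤ n ∧ (n - Tn a) % 2 = 0 from
        ⟨hg.1, hg.2, hp⟩)]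
    · rw [if_neg hp, if_neg (fun hc => hp hc.2.2)]
  · rw [if_neg hg, if_neg (fun hc => hg ⟨hc.1, hc.2.1⟩)]
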